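/- arXiv:0910.2113 — 6 statements merged into one kernel-verified Lean document; each statement's English description precedes it below -/
import Mathlib

section
/- In an atomic selfish routing instance with pricing in which every congestion cost is affine, the function Φ is a weighted potential: for every strategy profile P, every player i, and every alternative path Q ∈ Π_i, one has Φ(P[i↦Q]) − Φ(P) = 2·r_i·( t_i(P[i↦Q]) − t_i(P) ), where P[i↦Q] is the profile agreeing with P except that player i uses path Q. -/
/-!
Atomic selfish routing with pricing.  Edges form a finite type `E`; there are `k`
players, player `i` has demand `r i > 0` and a finite nonempty set `Paths i` of paths
(finite subsets of `E`).  Edge `e` has affine congestion cost `c_e(x) = a e * x + b e`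
and per-unit price function `u e : ℝ → ℝ`.
-/

open Finset

/-- The flow on edge `e` under profile `P`: the sum of the demands of the players
whose chosen path contains `e`. -/
noncomputable def edgeFlow {E : Type*} [Fintype E] [DecidableEq E] {k : ℕ}
    (r : Fin k → ℝ) (P : Fin k → Finset E) (e : E) : ℝ :=
  ∑ i, if e ∈ P i then r i else 0

/-- The per-unit cost to player `i` under profile `P`:
`t_i(P) = Σ_{e ∈ P_i} ( c_e(f_e(P)) + u_e(r_i) )` with `c_e(x) = a e * x + b e`. -/
noncomputable def playerCost {E : Type*} [Fintype E] [DecidableEq E] {k : ℕ}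
    (a b : E → ℝ) (u : E → ℝ → ℝ) (r : Fin k → ℝ) (P : Fin k → Finset E) (i : Fin k) : ℝ :=
  ∑ e ∈ P i, (a e * edgeFlow r P e + b e + u e (r i))

/-- The potential function
`Φ(P) = Σ_{e∈E} ( c_e(f_e(P))·f_e(P) + Σ_{i : e∈P_i} c_e(r_i)·r_i )
        + 2·Σ_{i=1}^k Σ_{e∈P_i} u_e(r_i)·r_i`. -/
noncomputable def potential {E : Type*} [Fintype E] [DecidableEq E] {k : ℕ}
    (a b : E → ℝ) (u : E → ℝ → ℝ) (r : Fin k → ℝ) (P : Fin k → Finset E) : ℝ :=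
  (∑ e, ((a e * edgeFlow r P e + b e) * edgeFlow r P e
      + ∑ i, if e ∈ P i then (a e * r i + b e) * r i else 0))
    + 2 * ∑ i, ∑ e ∈ P i, u e (r i) * r i

/-- `Φ` is a weighted potential: for every strategy profile `P`, every player `i`, and
every alternative path `Q ∈ Paths_i`,
`Φ(P[i↦Q]) − Φ(P) = 2·r_i·( t_i(P[i↦Q]) − t_i(P) )`. -/
theorem potential_is_weighted_potential {E : Type*} [Fintype E] [DecidableEq E] {k : ℕ}
    (a b : E → ℝ) (u : E → ℝ → ℝ) (r : Fin k → ℝ) (hr : ∀ i, 0 < r i)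
    (Paths : Fin k → Finset (Finset E)) (hPaths : ∀ i, (Paths i).Nonempty)
    (P : Fin k → Finset E) (hP : ∀ i, P i ∈ Paths i)
    (i : Fin k) (Q : Finset E) (hQ : Q ∈ Paths i) :
    potential a b u r (Function.update P i Q) - potential a b u r P
      = 2 * r i *
        (playerCost a b u r (Function.update P i Q) i - playerCost a b u r P i) := by
  classical
  set P' := Function.update P i Q with hP'
  have hPi : P' i = Q := Function.update_self i Q P
  have hPj : ∀ j, j ≠ i → P' j = P j := fun j hj => Function.update_of_ne hj Q P
  set F := edgeFlow r P with hF
  set δ : E → ℝ := fun e => (if e ∈ Q then r i else 0) - (if e ∈ P i then r i else 0) with hδ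
  -- flow change
  have hflow : ∀ e, edgeFlow r P' e = F e + δ e := by
    intro e
    have h1 : ∑ j, ((if e ∈ P' j then r j else 0) - (if e ∈ P j then r j else 0)) = δ e := by
      rw [Finset.sum_eq_single i]
      · rw [hPi]
      · intro j _ hj; rw [hPj j hj]; ring
      · simp
    rw [Finset.sum_sub_distrib] at h1
    have : edgeFlow r P' e = ∑ j, if e ∈ P' j then r j else 0 := rfl
    rw [this, hF]
    unfold edgeFlow
    linarith
  -- inner player sum change
  have hinner : ∀ e, ∑ j, (if e ∈ P' j then (a e * r j + b e) * r j else 0)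
      = (∑ j, if e ∈ P j then (a e * r j + b e) * r j else 0)
        + ((if e ∈ Q then (a e * r i + b e) * r i else 0)
          - (if e ∈ P i then (a e * r i + b e) * r i else 0)) := by
    intro e
    have h1 : ∑ j, ((if e ∈ P' j then (a e * r j + b e) * r j else 0)
        - (if e ∈ P j then (a e * r j + b e) * r j else 0))
        = (if e ∈ Q then (a e * r i + b e) * r i else 0)
          - (if e ∈ P i then (a e * r i + b e) * r i else 0) := by
      rw [Finset.sum_eq_single i]
      · rw [hPi]
      · intro j _ hj; rw [hPj j hj]; ring
      · simp
    rw [Finset.sum_sub_distrib] at h1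
    linarith
  -- u-sum change
  have husum : ∑ j, ∑ e ∈ P' j, u e (r j) * r j
      = (∑ j, ∑ e ∈ P j, u e (r j) * r j)
        + ((∑ e ∈ Q, u e (r i) * r i) - ∑ e ∈ P i, u e (r i) * r i) := by
    have h1 : ∑ j, ((∑ e ∈ P' j, u e (r j) * r j) - ∑ e ∈ P j, u e (r j) * r j)
        = (∑ e ∈ Q, u e (r i) * r i) - ∑ e ∈ P i, u e (r i) * r i := by
      rw [Finset.sum_eq_single i]
      · rw [hPi]
      · intro j _ hj; rw [hPj j hj]; ring
      · simp
    rw [Finset.sum_sub_distrib] at h1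
    linarith
  -- subset sums as indicator sums
  have convQ : ∀ g : E → ℝ, ∑ e ∈ Q, g e = ∑ e : E, if e ∈ Q then g e else 0 := by
    intro g; rw [Finset.sum_ite_mem, Finset.univ_inter]
  have convP : ∀ g : E → ℝ, ∑ e ∈ P i, g e = ∑ e : E, if e ∈ P i then g e else 0 := by
    intro g; rw [Finset.sum_ite_mem, Finset.univ_inter]
  -- the potential difference as a single edge sum
  have hL : potential a b u r P' - potential a b u r P
      = ∑ e, ((a e * (F e + δ e) + b e) * (F e + δ e) - (a e * F e + b e) * F e
          + ((if e ∈ Q then (a e * r i + b e) * r i else 0)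
            - (if e ∈ P i then (a e * r i + b e) * r i else 0))
          + 2 * ((if e ∈ Q then u e (r i) * r i else 0)
            - (if e ∈ P i then u e (r i) * r i else 0))) := by
    unfold potential
    rw [husum, convQ (fun e => u e (r i) * r i), convP (fun e => u e (r i) * r i)]
    simp only [hflow, hinner, ← hF]
    simp only [Finset.sum_add_distrib, Finset.sum_sub_distrib, Finset.mul_sum, mul_sub, mul_add]
    ring
  -- the player cost difference as a single edge sum
  have hR : playerCost a b u r P' i - playerCost a b u r P i
      = ∑ e, ((if e ∈ Q then a e * (F e + δ e) + b e + u e (r i) else 0)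
          - (if e ∈ P i then a e * F e + b e + u e (r i) else 0)) := by
    unfold playerCost
    rw [hPi]
    simp only [hflow, ← hF]
    rw [convQ (fun e => a e * (F e + δ e) + b e + u e (r i)),
      convP (fun e => a e * F e + b e + u e (r i)), Finset.sum_sub_distrib]
  rw [hL, hR, Finset.mul_sum]
  apply Finset.sum_congr rfl
  intro e _
  by_cases h1 : e ∈ Q <;> by_cases h2 : e ∈ P i <;> simp only [hδ, h1, h2, if_true, if_false] <;> ring
end

section
/- In an atomic selfish routing instance with pricing in which every congestion cost is affine and every demand r_i is strictly positive, any strategy profile P that minimizes the potential function Φ over the (finite) set of all strategy profiles is an equilibrium. -/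
/-!
Atomic selfish routing with pricing.  Edges form a finite type `E`; there are `k`
players, player `i` has demand `r i > 0` and a finite nonempty set `Paths i` of paths
(finite subsets of `E`).  Edge `e` has affine congestion cost `c_e(x) = a e * x + b e`
and per-unit price function `u e : ℝ → ℝ`.
-/

open Finset

/-- A profile `P` is an equilibrium if no player can decrease its per-unit cost by
unilaterally switching to another available path. -/
def IsEquilibrium {E : Type*} [Fintype E] [DecidableEq E] {k : ℕ}
    (a b : E → ℝ) (u : E → ℝ → ℝ) (r : Fin k → ℝ)
    (Paths : Fin k → Finset (Finset E)) (P : Fin k → Finset E) : Prop :=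
  ∀ i : Fin k, ∀ Q ∈ Paths i,
    playerCost a b u r P i ≤ playerCost a b u r (Function.update P i Q) i

lemma sum_update_fn {k : ℕ} {E : Type*} (g : Fin k → Finset E → ℝ)
    (P : Fin k → Finset E) (i : Fin k) (Q : Finset E) :
    ∑ j, g j (Function.update P i Q j) = (∑ j, g j (P j)) + (g i Q - g i (P i)) := by
  rw [← Finset.sum_erase_add _ _ (mem_univ i),
      ← Finset.sum_erase_add _ (fun j => g j (P j)) (mem_univ i),
      Function.update_self]
  rw [Finset.sum_congr rfl (fun j hj => by
    rw [Function.update_of_ne (Finset.ne_of_mem_erase hj)])]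
  ring

lemma sum_ite_univ {E : Type*} [Fintype E] [DecidableEq E] (s : Finset E) (g : E → ℝ) :
    ∑ e ∈ s, g e = ∑ e, if e ∈ s then g e else 0 := by
  rw [Finset.sum_ite_mem, Finset.univ_inter]

lemma potential_update {E : Type*} [Fintype E] [DecidableEq E] {k : ℕ}
    (a b : E → ℝ) (u : E → ℝ → ℝ) (r : Fin k → ℝ)
    (P : Fin k → Finset E) (i : Fin k) (Q : Finset E) :
    potential a b u r (Function.update P i Q) - potential a b u r P
      = 2 * r i * (playerCost a b u r (Function.update P i Q) i
                    - playerCost a b u r P i) := by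
  have hf : ∀ e, edgeFlow r (Function.update P i Q) e
      = edgeFlow r P e + ((if e ∈ Q then r i else 0) - (if e ∈ P i then r i else 0)) :=
    fun e => sum_update_fn (fun j S => if e ∈ S then r j else 0) P i Q
  have hs : ∀ e, (∑ j, if e ∈ Function.update P i Q j then (a e * r j + b e) * r j else 0)
      = (∑ j, if e ∈ P j then (a e * r j + b e) * r j else 0)
        + ((if e ∈ Q then (a e * r i + b e) * r i else 0)
            - (if e ∈ P i then (a e * r i + b e) * r i else 0)) :=
    fun e => sum_update_fn (fun j S => if e ∈ S then (a e * r j + b e) * r j else 0) P i Q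
  have hu : (∑ j, ∑ e ∈ Function.update P i Q j, u e (r j) * r j)
      = (∑ j, ∑ e ∈ P j, u e (r j) * r j)
        + ((∑ e ∈ Q, u e (r i) * r i) - (∑ e ∈ P i, u e (r i) * r i)) :=
    sum_update_fn (fun j S => ∑ e ∈ S, u e (r j) * r j) P i Q
  have hc : playerCost a b u r (Function.update P i Q) i
      = ∑ e, if e ∈ Q then a e * edgeFlow r (Function.update P i Q) e + b e + u e (r i) else 0 := by
    unfold playerCost
    rw [Function.update_self, sum_ite_univ]
  have hcP : playerCost a b u r P i
      = ∑ e, if e ∈ P i then a e * edgeFlow r P e + b e + u e (r i) else 0 := by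
    unfold playerCost
    rw [sum_ite_univ]
  rw [hc, hcP]
  unfold potential
  rw [hu, sum_ite_univ Q (fun e => u e (r i) * r i), sum_ite_univ (P i) (fun e => u e (r i) * r i)]
  simp only [hf, hs]
  have key : ∀ e : E,
      2 * r i * (if e ∈ Q then a e * (edgeFlow r P e
              + ((if e ∈ Q then r i else 0) - (if e ∈ P i then r i else 0))) + b e + u e (r i) else 0)
        - 2 * r i * (if e ∈ P i then a e * edgeFlow r P e + b e + u e (r i) else 0)
      = ((a e * (edgeFlow r P e + ((if e ∈ Q then r i else 0) - (if e ∈ P i then r i else 0))) + b e)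
          * (edgeFlow r P e + ((if e ∈ Q then r i else 0) - (if e ∈ P i then r i else 0)))
        + ((∑ j, if e ∈ P j then (a e * r j + b e) * r j else 0)
            + ((if e ∈ Q then (a e * r i + b e) * r i else 0)
                - (if e ∈ P i then (a e * r i + b e) * r i else 0))))
      - ((a e * edgeFlow r P e + b e) * edgeFlow r P e
        + (∑ j, if e ∈ P j then (a e * r j + b e) * r j else 0))
      + (2 * (if e ∈ Q then u e (r i) * r i else 0) - 2 * (if e ∈ P i then u e (r i) * r i else 0)) := by
    intro e
    by_cases hq : e ∈ Q <;> by_cases hp : e ∈ P i <;> simp [hq, hp] <;> ring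
  conv_rhs => rw [mul_sub, Finset.mul_sum, Finset.mul_sum, ← Finset.sum_sub_distrib,
    Finset.sum_congr rfl (fun e _ => key e)]
  simp only [Finset.sum_add_distrib, Finset.sum_sub_distrib, ← Finset.mul_sum]
  ring

/-- Any strategy profile minimizing the potential `Φ` over all strategy profiles is an
equilibrium, provided every congestion cost is affine and every demand is positive. -/
theorem potential_minimizer_isEquilibrium {E : Type*} [Fintype E] [DecidableEq E] {k : ℕ}
    (a b : E → ℝ) (u : E → ℝ → ℝ) (r : Fin k → ℝ) (hr : ∀ i, 0 < r i)
    (Paths : Fin k → Finset (Finset E)) (hPaths : ∀ i, (Paths i).Nonempty)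
    (P : Fin k → Finset E) (hP : ∀ i, P i ∈ Paths i)
    (hmin : ∀ P' : Fin k → Finset E, (∀ i, P' i ∈ Paths i) →
      potential a b u r P ≤ potential a b u r P') :
    IsEquilibrium a b u r Paths P := by
  intro i Q hQ
  have hP' : ∀ j, Function.update P i Q j ∈ Paths j := by
    intro j
    rcases eq_or_ne j i with rfl | hj
    · simpa using hQ
    · simpa [Function.update_of_ne hj] using hP j
  have h := hmin (Function.update P i Q) hP'
  have hk := potential_update a b u r P i Q
  nlinarith [hr i]
end

section
/- For every real u with 0 ≤ u ≤ 1, the Braess cost ratio in the new network satisfies (1 + u) / ( 1 + (1/2 + u)/2 ) = (4 + 4u) / (5 + 2u), and this quantity is at most 8/7, with equality exactly when u = 1. Consequently the worst-case Braess ratio in the new pricing model is 8/7. -/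
/-- For every real `u` with `0 ≤ u ≤ 1`, the Braess cost ratio in the new network
satisfies `(1 + u) / (1 + (1 / 2 + u) / 2) = (4 + 4 * u)/(5 + 2 * u)`, this quantity is at most
`8/7`, and it equals `8/7` exactly when `u = 1`; hence the worst-case Braess ratio in
the new pricing model is `8/7`. -/
theorem braess_ratio_new_network (u : ℝ) (hu0 : 0 ≤ u) (hu1 : u ≤ 1) :
    (1 + u) / (1 + (1 / 2 + u) / 2) = (4 + 4 * u) / (5 + 2 * u) ∧
    (1 + u) / (1 + (1 / 2 + u) / 2) ≤ 8 / 7 ∧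
    ((1 + u) / (1 + (1 / 2 + u) / 2) = 8 / 7 ↔ u = 1) := by
  have hd : (1 + (1 / 2 + u) / 2) > 0 := by linarith
  have hd' : (5 : ℝ) + 2 * u > 0 := by linarith
  have heq : (1 + u) / (1 + (1 / 2 + u) / 2) = (4 + 4 * u) / (5 + 2 * u) := by
    rw [div_eq_div_iff hd.ne' hd'.ne']; ring
  refine ⟨heq, ?_, ?_⟩
  · rw [heq, div_le_div_iff₀ hd' (by norm_num)]; linarith
  · rw [heq]
    constructor
    · intro h
      rw [div_eq_div_iff hd'.ne' (by norm_num : (7:ℝ) ≠ 0)] at h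
      linarith
    · intro h; subst h; norm_num
end

section
/- For all c₁, c₂ ∈ [0,1] with c₁ + c₂ = 1 and all u ∈ [0,1], the generic Braess cost ratio satisfies ρ(c₁, c₂, u) = 4(c₁ + c₂·u) / (2 + c₁ + 2·c₂·u) ≤ 4/3, with equality if and only if c₂·(2 − u) = 0. -/
/-- For all `c₁, c₂ ∈ [0,1]` with `c₁ + c₂ = 1` and all `u ∈ [0,1]`, the generic Braess
cost ratio satisfies `4(c₁ + c₂·u)/(2 + c₁ + 2·c₂·u) ≤ 4/3`, with equality if and only
if `c₂·(2 − u) = 0`. -/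
theorem generic_braess_ratio_le (c₁ c₂ u : ℝ)
    (hc₁ : c₁ ∈ Set.Icc (0 : ℝ) 1) (hc₂ : c₂ ∈ Set.Icc (0 : ℝ) 1)
    (hsum : c₁ + c₂ = 1) (hu : u ∈ Set.Icc (0 : ℝ) 1) :
    4 * (c₁ + c₂ * u) / (2 + c₁ + 2 * c₂ * u) ≤ 4 / 3 ∧
    (4 * (c₁ + c₂ * u) / (2 + c₁ + 2 * c₂ * u) = 4 / 3 ↔ c₂ * (2 - u) = 0) := by
  obtain ⟨h1, h2⟩ := hc₁
  obtain ⟨h3, h4⟩ := hc₂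
  obtain ⟨h5, h6⟩ := hu
  have hd : 2 + c₁ + 2 * c₂ * u > 0 := by nlinarith
  constructor
  · rw [div_le_div_iff₀ hd (by norm_num)]
    nlinarith
  · rw [div_eq_div_iff hd.ne' (by norm_num)]
    constructor <;> intro h <;> nlinarith
end

section
/- In an atomic selfish routing instance with pricing in which every congestion cost c_e(x) = a_e·x + b_e is affine with a_e ≥ 0 and every demand r_i > 0, let P be an equilibrium profile and P* any other strategy profile. Then SC(P) ≤ SC(P*) + Σ_{e∈E} a_e · f_e(P) · f_e(P*). -/
/-!
Atomic selfish routing with pricing.  Edges form a finite type `E`; there are `k`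
players, player `i` has demand `r i > 0` and a finite nonempty set `Paths i` of paths
(finite subsets of `E`).  Edge `e` has affine congestion cost `c_e(x) = a e * x + b e`
and per-unit price function `u e : ℝ → ℝ`.
-/

open Finset

/-- The social cost `SC(P) = Σ_{i=1}^k r_i · t_i(P)`. -/
noncomputable def socialCost {E : Type*} [Fintype E] [DecidableEq E] {k : ℕ}
    (a b : E → ℝ) (u : E → ℝ → ℝ) (r : Fin k → ℝ) (P : Fin k → Finset E) : ℝ :=
  ∑ i, r i * playerCost a b u r P i

/-- If every congestion cost is affine with `a e ≥ 0` and every demand is positive, then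
for an equilibrium profile `P` and any other strategy profile `P*`,
`SC(P) ≤ SC(P*) + Σ_{e∈E} a_e · f_e(P) · f_e(P*)`. -/
theorem equilibrium_socialCost_le {E : Type*} [Fintype E] [DecidableEq E] {k : ℕ}
    (a b : E → ℝ) (u : E → ℝ → ℝ) (r : Fin k → ℝ)
    (ha : ∀ e, 0 ≤ a e) (hr : ∀ i, 0 < r i)
    (Paths : Fin k → Finset (Finset E))
    (P Pstar : Fin k → Finset E)
    (hP : ∀ i, P i ∈ Paths i) (hPstar : ∀ i, Pstar i ∈ Paths i)
    (heq : IsEquilibrium a b u r Paths P) :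
    socialCost a b u r P ≤
      socialCost a b u r Pstar + ∑ e, a e * edgeFlow r P e * edgeFlow r Pstar e := by
  have hr' : ∀ i, 0 ≤ r i := fun i => (hr i).le
  have hflow_nonneg : ∀ (Q : Fin k → Finset E) (e : E), 0 ≤ edgeFlow r Q e := by
    intro Q e
    exact Finset.sum_nonneg fun j _ => by split <;> simp [hr' _]
  have hle_flow : ∀ (Q : Fin k → Finset E) (i : Fin k) (e : E), e ∈ Q i →
      r i ≤ edgeFlow r Q e := by
    intro Q i e he
    have := Finset.single_le_sum (f := fun j => if e ∈ Q j then r j else 0)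
      (fun j _ => by show 0 ≤ (if e ∈ Q j then r j else 0); split <;> simp [hr' _]) (Finset.mem_univ i)
    simpa [he, edgeFlow] using this
  -- flow after unilateral deviation is at most old flow plus r i
  have hupd : ∀ (i : Fin k) (Q : Finset E) (e : E),
      edgeFlow r (Function.update P i Q) e ≤ edgeFlow r P e + r i := by
    intro i Q e
    have h1 : ∀ j : Fin k, (if e ∈ Function.update P i Q j then r j else 0) ≤
        (if e ∈ P j then r j else 0) + (if j = i then r i else 0) := by
      intro j
      by_cases hji : j = i
      · subst hji
        simp only [Function.update_self, if_pos rfl]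
        split <;> split <;> simp [hr' _]
      · simp [Function.update_of_ne hji, hji]
    calc edgeFlow r (Function.update P i Q) e
        ≤ ∑ j, ((if e ∈ P j then r j else 0) + (if j = i then r i else 0)) :=
          Finset.sum_le_sum fun j _ => h1 j
      _ = edgeFlow r P e + r i := by
          rw [Finset.sum_add_distrib]
          simp [edgeFlow]
  -- key per-player inequality
  have hkey : ∀ i, playerCost a b u r P i ≤
      ∑ e ∈ Pstar i, (a e * (edgeFlow r P e + r i) + b e + u e (r i)) := by
    intro i
    refine (heq i (Pstar i) (hPstar i)).trans ?_
    unfold playerCost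
    rw [Function.update_self]
    refine Finset.sum_le_sum fun e _ => ?_
    have := mul_le_mul_of_nonneg_left (hupd i (Pstar i) e) (ha e)
    linarith
  have hSC : socialCost a b u r P ≤
      ∑ i, r i * ∑ e ∈ Pstar i, (a e * (edgeFlow r P e + r i) + b e + u e (r i)) := by
    unfold socialCost
    exact Finset.sum_le_sum fun i _ => mul_le_mul_of_nonneg_left (hkey i) (hr' i)
  refine hSC.trans ?_
  -- rearrange the RHS
  have hsplit : ∀ i, r i * ∑ e ∈ Pstar i, (a e * (edgeFlow r P e + r i) + b e + u e (r i)) =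
      r i * playerCost a b u r Pstar i +
      r i * ∑ e ∈ Pstar i, a e * (edgeFlow r P e + r i - edgeFlow r Pstar e) := by
    intro i
    unfold playerCost
    rw [← mul_add, ← Finset.sum_add_distrib]
    congr 1
    refine Finset.sum_congr rfl fun e _ => ?_
    ring
  have hterm : ∀ i, r i * ∑ e ∈ Pstar i, a e * (edgeFlow r P e + r i - edgeFlow r Pstar e) ≤
      r i * ∑ e ∈ Pstar i, a e * edgeFlow r P e := by
    intro i
    refine mul_le_mul_of_nonneg_left (Finset.sum_le_sum fun e he => ?_) (hr' i)
    have h2 : r i ≤ edgeFlow r Pstar e := hle_flow Pstar i e he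
    have := mul_le_mul_of_nonneg_left (show edgeFlow r P e + r i - edgeFlow r Pstar e ≤ edgeFlow r P e by linarith) (ha e)
    linarith
  have hswap : ∑ i, r i * ∑ e ∈ Pstar i, a e * edgeFlow r P e =
      ∑ e, a e * edgeFlow r P e * edgeFlow r Pstar e := by
    have : ∀ i, r i * ∑ e ∈ Pstar i, a e * edgeFlow r P e =
        ∑ e, (if e ∈ Pstar i then a e * edgeFlow r P e * r i else 0) := by
      intro i
      rw [Finset.mul_sum]
      rw [Finset.sum_ite_mem, Finset.univ_inter]
      refine Finset.sum_congr rfl fun e _ => by ring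
    simp_rw [this]
    rw [Finset.sum_comm]
    refine Finset.sum_congr rfl fun e _ => ?_
    simp only [edgeFlow, Finset.mul_sum]
    refine Finset.sum_congr rfl fun i _ => ?_
    split <;> simp
  calc ∑ i, r i * ∑ e ∈ Pstar i, (a e * (edgeFlow r P e + r i) + b e + u e (r i))
      = ∑ i, (r i * playerCost a b u r Pstar i +
          r i * ∑ e ∈ Pstar i, a e * (edgeFlow r P e + r i - edgeFlow r Pstar e)) := by
        exact Finset.sum_congr rfl fun i _ => hsplit i
    _ = socialCost a b u r Pstar +
          ∑ i, r i * ∑ e ∈ Pstar i, a e * (edgeFlow r P e + r i - edgeFlow r Pstar e) := by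
        rw [Finset.sum_add_distrib]; rfl
    _ ≤ socialCost a b u r Pstar + ∑ i, r i * ∑ e ∈ Pstar i, a e * edgeFlow r P e := by
        exact add_le_add_right (Finset.sum_le_sum fun i _ => hterm i) _
    _ = socialCost a b u r Pstar + ∑ e, a e * edgeFlow r P e * edgeFlow r Pstar e := by
        rw [hswap]
end

section
/- In an atomic selfish routing instance with pricing in which every congestion cost c_e(x) = a_e·x + b_e is affine with a_e ≥ 0 and b_e ≥ 0, every per-unit price u_e(r_i) ≥ 0, and every demand r_i > 0, the price of anarchy is at most (3 + √5)/2: for every equilibrium profile P and every strategy profile P*, SC(P) ≤ ((3 + √5)/2) · SC(P*). -/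
/-!
Atomic selfish routing with pricing.  Edges form a finite type `E`; there are `k`
players, player `i` has demand `r i > 0` and a finite nonempty set `Paths i` of paths
(finite subsets of `E`).  Edge `e` has affine congestion cost `c_e(x) = a e * x + b e`
and per-unit price function `u e : ℝ → ℝ`.
-/

open Finset

section AuxPoA

variable {E : Type*} [Fintype E] [DecidableEq E] {k : ℕ}

lemma sum_over_path (s : Finset E) (h : E → ℝ) :
    ∑ e ∈ s, h e = ∑ e : E, if e ∈ s then h e else 0 := by
  rw [Finset.sum_ite_mem, Finset.univ_inter]

lemma swap_sum (r : Fin k → ℝ) (Q : Fin k → Finset E) (h : E → ℝ) :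
    ∑ i, r i * ∑ e ∈ Q i, h e = ∑ e, h e * edgeFlow r Q e := by
  have h1 : ∀ i, r i * ∑ e ∈ Q i, h e = ∑ e : E, if e ∈ Q i then r i * h e else 0 := by
    intro i
    rw [Finset.mul_sum]
    exact sum_over_path (Q i) (fun e => r i * h e)
  simp only [h1]
  rw [Finset.sum_comm]
  unfold edgeFlow
  refine Finset.sum_congr rfl fun e _ => ?_
  rw [Finset.mul_sum]
  exact Finset.sum_congr rfl fun i _ => by split_ifs <;> ring

lemma sum_sq_le (a : E → ℝ) (ha : ∀ e, 0 ≤ a e) (r : Fin k → ℝ) (hr : ∀ i, 0 ≤ r i)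
    (Q : Fin k → Finset E) :
    ∑ i, r i * ∑ e ∈ Q i, a e * r i ≤ ∑ e, a e * (edgeFlow r Q e) ^ 2 := by
  have key : ∑ i, r i * ∑ e ∈ Q i, a e * r i
      = ∑ e, a e * ∑ i, (if e ∈ Q i then (r i) ^ 2 else 0) := by
    have h1 : ∀ i, r i * ∑ e ∈ Q i, a e * r i
        = ∑ e : E, if e ∈ Q i then r i * (a e * r i) else 0 := by
      intro i
      rw [Finset.mul_sum]
      exact sum_over_path (Q i) (fun e => r i * (a e * r i))
    simp only [h1]
    rw [Finset.sum_comm]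
    refine Finset.sum_congr rfl fun e _ => ?_
    rw [Finset.mul_sum]
    exact Finset.sum_congr rfl fun i _ => by split_ifs <;> ring
  rw [key]
  refine Finset.sum_le_sum fun e _ => mul_le_mul_of_nonneg_left ?_ (ha e)
  unfold edgeFlow
  have hnn : ∀ j ∈ (univ : Finset (Fin k)), 0 ≤ if e ∈ Q j then r j else 0 := by
    intro j _; split_ifs; exacts [hr j, le_rfl]
  calc ∑ i, (if e ∈ Q i then (r i) ^ 2 else 0)
      ≤ ∑ i, (if e ∈ Q i then r i else 0) * (∑ j, if e ∈ Q j then r j else 0) := by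
        refine Finset.sum_le_sum fun i _ => ?_
        split_ifs with h
        · have h1 : r i ≤ ∑ j, if e ∈ Q j then r j else 0 := by
            have := Finset.single_le_sum hnn (Finset.mem_univ i)
            simpa [h] using this
          nlinarith [hr i]
        · simp
    _ = (∑ i, if e ∈ Q i then r i else 0) ^ 2 := by rw [← Finset.sum_mul]; ring

lemma edgeFlow_update_le (r : Fin k → ℝ) (hr : ∀ j, 0 ≤ r j)
    (P : Fin k → Finset E) (i : Fin k) (Q : Finset E) (e : E) :
    edgeFlow r (Function.update P i Q) e ≤ edgeFlow r P e + r i := by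
  unfold edgeFlow
  have hle : ∀ j ∈ (univ : Finset (Fin k)),
      (if e ∈ Function.update P i Q j then r j else 0)
        ≤ (if e ∈ P j then r j else 0) + (if j = i then r i else 0) := by
    intro j _
    rcases eq_or_ne j i with rfl | hj
    · simp only [Function.update_self, if_pos rfl]
      split_ifs <;> linarith [hr j]
    · simp [Function.update_of_ne hj, hj]
  calc (∑ j, if e ∈ Function.update P i Q j then r j else 0)
      ≤ ∑ j, ((if e ∈ P j then r j else 0) + (if j = i then r i else 0)) :=
        Finset.sum_le_sum hle
    _ = (∑ j, if e ∈ P j then r j else 0) + r i := by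
        rw [Finset.sum_add_distrib]
        simp

lemma socialCost_decomp (a b : E → ℝ) (u : E → ℝ → ℝ) (r : Fin k → ℝ)
    (Q : Fin k → Finset E) :
    socialCost a b u r Q = (∑ e, a e * (edgeFlow r Q e) ^ 2)
      + ∑ i, r i * ∑ e ∈ Q i, (b e + u e (r i)) := by
  unfold socialCost playerCost
  have hsplit : ∀ i : Fin k, r i * ∑ e ∈ Q i, (a e * edgeFlow r Q e + b e + u e (r i))
      = r i * (∑ e ∈ Q i, a e * edgeFlow r Q e) + r i * ∑ e ∈ Q i, (b e + u e (r i)) := by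
    intro i
    rw [← mul_add, ← Finset.sum_add_distrib]
    congr 1
    exact Finset.sum_congr rfl fun e _ => by ring
  simp_rw [hsplit]
  rw [Finset.sum_add_distrib]
  congr 1
  rw [swap_sum r Q (fun e => a e * edgeFlow r Q e)]
  exact Finset.sum_congr rfl fun e _ => by ring

end AuxPoA

set_option maxHeartbeats 1600000 in
/-- Price of anarchy bound: if every congestion cost is affine with `a e ≥ 0` and
`b e ≥ 0`, every per-unit price `u_e(r_i)` is nonnegative, and every demand is positive,
then for every equilibrium profile `P` and every strategy profile `P*`,
`SC(P) ≤ ((3 + √5)/2) · SC(P*)`. -/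
theorem priceOfAnarchy_le {E : Type*} [Fintype E] [DecidableEq E] {k : ℕ}
    (a b : E → ℝ) (u : E → ℝ → ℝ) (r : Fin k → ℝ)
    (ha : ∀ e, 0 ≤ a e) (hb : ∀ e, 0 ≤ b e) (hu : ∀ e i, 0 ≤ u e (r i))
    (hr : ∀ i, 0 < r i)
    (Paths : Fin k → Finset (Finset E))
    (P Pstar : Fin k → Finset E)
    (hP : ∀ i, P i ∈ Paths i) (hPstar : ∀ i, Pstar i ∈ Paths i)
    (heq : IsEquilibrium a b u r Paths P) :
    socialCost a b u r P ≤ (3 + Real.sqrt 5) / 2 * socialCost a b u r Pstar := by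
  classical
  have hs2 : Real.sqrt 5 ^ 2 = 5 := Real.sq_sqrt (by norm_num)
  have hs0 : 0 ≤ Real.sqrt 5 := Real.sqrt_nonneg 5
  set s : ℝ := Real.sqrt 5 with hsdef
  have hs1 : 2 ≤ s := by nlinarith
  have hs3 : s ≤ 3 := by nlinarith
  have hrn : ∀ i, 0 ≤ r i := fun i => (hr i).le
  set f : E → ℝ := edgeFlow r P with hfdef
  set g : E → ℝ := edgeFlow r Pstar with hgdef
  set X : ℝ := ∑ e, a e * f e ^ 2 with hXdef
  set Y : ℝ := ∑ e, a e * g e ^ 2 with hYdef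
  set C : ℝ := ∑ e, a e * f e * g e with hCdef
  set S : ℝ := socialCost a b u r P with hSdef
  set T : ℝ := socialCost a b u r Pstar with hTdef
  -- decompositions
  have hbu : ∀ Q : Fin k → Finset E, 0 ≤ ∑ i, r i * ∑ e ∈ Q i, (b e + u e (r i)) := by
    intro Q
    refine Finset.sum_nonneg fun i _ => mul_nonneg (hrn i) ?_
    exact Finset.sum_nonneg fun e _ => add_nonneg (hb e) (hu e i)
  have hSd : S = X + ∑ i, r i * ∑ e ∈ P i, (b e + u e (r i)) :=
    socialCost_decomp a b u r P
  have hTd : T = Y + ∑ i, r i * ∑ e ∈ Pstar i, (b e + u e (r i)) :=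
    socialCost_decomp a b u r Pstar
  have hXS : X ≤ S := by rw [hSd]; linarith [hbu P]
  have hYT : Y ≤ T := by rw [hTd]; linarith [hbu Pstar]
  -- Step 1: equilibrium inequality
  have step1 : S ≤ ∑ i, r i * ∑ e ∈ Pstar i, (a e * (f e + r i) + b e + u e (r i)) := by
    rw [hSdef]
    unfold socialCost
    refine Finset.sum_le_sum fun i _ => mul_le_mul_of_nonneg_left ?_ (hrn i)
    calc playerCost a b u r P i
        ≤ playerCost a b u r (Function.update P i (Pstar i)) i := heq i _ (hPstar i)
      _ = ∑ e ∈ Pstar i,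
            (a e * edgeFlow r (Function.update P i (Pstar i)) e + b e + u e (r i)) := by
          unfold playerCost
          rw [Function.update_self]
      _ ≤ ∑ e ∈ Pstar i, (a e * (f e + r i) + b e + u e (r i)) := by
          refine Finset.sum_le_sum fun e _ => ?_
          have h1 := edgeFlow_update_le r hrn P i (Pstar i) e
          have h2 := mul_le_mul_of_nonneg_left h1 (ha e)
          linarith
  -- Step 2: split the right-hand side
  have step2 : ∑ i, r i * ∑ e ∈ Pstar i, (a e * (f e + r i) + b e + u e (r i))
      = (∑ i, r i * ∑ e ∈ Pstar i, a e * f e)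
        + (∑ i, r i * ∑ e ∈ Pstar i, a e * r i)
        + ∑ i, r i * ∑ e ∈ Pstar i, (b e + u e (r i)) := by
    rw [← Finset.sum_add_distrib, ← Finset.sum_add_distrib]
    refine Finset.sum_congr rfl fun i _ => ?_
    rw [← mul_add, ← mul_add, ← Finset.sum_add_distrib, ← Finset.sum_add_distrib]
    congr 1
    exact Finset.sum_congr rfl fun e _ => by ring
  have piece1 : ∑ i, r i * ∑ e ∈ Pstar i, a e * f e = C := by
    rw [swap_sum r Pstar (fun e => a e * f e), hCdef]
  have piece2 : ∑ i, r i * ∑ e ∈ Pstar i, a e * r i ≤ Y :=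
    sum_sq_le a ha r hrn Pstar
  have h1 : S ≤ C + T := by
    have := step1
    rw [step2, piece1] at this
    linarith [piece2, hTd]
  -- Step 3: cross-term bound
  have h2 : (s - 1) * C ≤ (s - 1) ^ 2 / 4 * X + Y := by
    rw [hCdef, hXdef, hYdef, Finset.mul_sum, Finset.mul_sum, ← Finset.sum_add_distrib]
    refine Finset.sum_le_sum fun e _ => ?_
    nlinarith [mul_nonneg (ha e) (sq_nonneg ((s - 1) * f e - 2 * g e))]
  -- Final algebra
  have hX' : (s - 1) ^ 2 / 4 * X ≤ (s - 1) ^ 2 / 4 * S :=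
    mul_le_mul_of_nonneg_left hXS (by positivity)
  have h1' : (s - 1) * S ≤ (s - 1) * (C + T) :=
    mul_le_mul_of_nonneg_left h1 (by linarith)
  have hsq : (s - 1) ^ 2 = 6 - 2 * s := by nlinarith
  have chain : (s - 1) * S ≤ (6 - 2 * s) / 4 * S + T + (s - 1) * T := by
    rw [hsq] at hX' h2
    nlinarith [h1', h2, hX', hYT]
  have h3s : (0 : ℝ) < 3 * s - 5 := by linarith
  have key : (3 * s - 5) / 2 * S ≤ s * T := by linarith
  have hfinal : 2 * s / (3 * s - 5) = (3 + s) / 2 := by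
    rw [div_eq_div_iff h3s.ne' two_ne_zero]
    linear_combination (-3 : ℝ) * hs2
  rw [← hfinal, div_mul_eq_mul_div, le_div_iff₀ h3s]
  nlinarith [key, h3s]
end
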